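/- For any $1 < p < q$ with $p < \frac{7}{3}$, $\int_0^1 \frac{-(5-p)(1-s^{\frac{p-1}{2}}) + (5-q)(1-s^{\frac{q-1}{2}})}{(s^{\frac{p-1}{2}} - s^{\frac{q-1}{2}})^{3/2}}\,ds = 2\,\frac{7-2p-q}{q-p}\,B\!\left(\frac{7-3p}{2(q-p)}, \frac{1}{2}\right)$. -/

import Mathlib

open MeasureTheory

noncomputable def betaReal (x y : ℝ) : ℝ :=
  ∫ t in (0:ℝ)..1, t ^ (x - 1) * (1 - t) ^ (y - 1)

open Real Set intervalIntegral

lemma one_sub_rpow_le {e s : ℝ} (he : 0 < e) (h0 : 0 ≤ s) (h1 : s ≤ 1) :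
    1 - s ^ e ≤ max e 1 * (1 - s) := by
  rcases eq_or_lt_of_le h0 with h0' | h0'
  · rw [← h0', Real.zero_rpow he.ne']
    nlinarith [le_max_right e 1]
  rcases le_total e 1 with h | h
  · have hs : s ^ (1:ℝ) ≤ s ^ e := Real.rpow_le_rpow_of_exponent_ge h0' h1 h
    rw [Real.rpow_one] at hs
    nlinarith [le_max_right e 1]
  · have hb := one_add_mul_self_le_rpow_one_add (s := s - 1) (by linarith) (p := e) h
    rw [show (1:ℝ) + (s-1) = s by ring] at hb
    nlinarith [le_max_left e 1]

lemma le_one_sub_rpow {e s : ℝ} (he : 0 < e) (h0 : 0 ≤ s) (h1 : s ≤ 1) :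
    min e 1 * (1 - s) ≤ 1 - s ^ e := by
  rcases eq_or_lt_of_le h0 with h0' | h0'
  · rw [← h0', Real.zero_rpow he.ne']
    nlinarith [min_le_right e 1]
  rcases le_total e 1 with h | h
  · have hb := rpow_one_add_le_one_add_mul_self (s := s - 1) (by linarith) he.le h
    rw [show (1:ℝ) + (s-1) = s by ring] at hb
    have : min e 1 = e := min_eq_left h
    nlinarith
  · have hs : s ^ e ≤ s ^ (1:ℝ) := Real.rpow_le_rpow_of_exponent_ge h0' h1 h
    rw [Real.rpow_one] at hs
    nlinarith [min_le_right e 1]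

lemma beta_type_integrable {e₁ e₂ : ℝ} (h₁ : -1 < e₁) (h₂ : -1 < e₂) :
    IntervalIntegrable (fun x : ℝ => x ^ e₁ * (1 - x) ^ e₂) volume 0 1 := by
  have hmeas : ∀ a b : ℝ, AEStronglyMeasurable (fun x : ℝ => x ^ e₁ * (1 - x) ^ e₂)
      (volume.restrict (Set.uIoc a b)) := by
    intro a b
    have : Measurable (fun x : ℝ => x ^ e₁ * (1 - x) ^ e₂) := by fun_prop
    exact this.aestronglyMeasurable
  have half : IntervalIntegrable (fun x : ℝ => x ^ e₁ * (1 - x) ^ e₂) volume 0 (1/2) := by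
    set C : ℝ := max 1 ((1/2 : ℝ) ^ e₂) with hC
    have hC0 : 0 ≤ C := le_trans zero_le_one (le_max_left _ _)
    refine ((intervalIntegrable_rpow' h₁ (a := 0) (b := 1/2)).const_mul C).mono_fun
      (hmeas 0 (1/2)) ?_
    filter_upwards [ae_restrict_mem measurableSet_uIoc] with x hx
    rw [uIoc_of_le (by norm_num : (0:ℝ) ≤ 1/2)] at hx
    have hx0 : 0 < x := hx.1
    have hx2 : x ≤ 1/2 := hx.2
    have hbound : (1 - x) ^ e₂ ≤ C := by
      rcases le_total 0 e₂ with h | h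
      · calc (1 - x) ^ e₂ ≤ 1 ^ e₂ := by
              apply Real.rpow_le_rpow (by linarith) (by linarith) h
          _ = 1 := Real.one_rpow _
          _ ≤ C := le_max_left _ _
      · calc (1 - x) ^ e₂ ≤ (1/2 : ℝ) ^ e₂ := by
              apply Real.rpow_le_rpow_of_nonpos (by norm_num) (by linarith) h
          _ ≤ C := le_max_right _ _
    have h1x : 0 ≤ (1 - x) ^ e₂ := Real.rpow_nonneg (by linarith) _
    have hxe : 0 ≤ x ^ e₁ := Real.rpow_nonneg hx0.le _
    simp only [Real.norm_eq_abs, abs_of_nonneg (mul_nonneg hxe h1x),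
      abs_of_nonneg (mul_nonneg hC0 hxe)]
    calc x ^ e₁ * (1-x) ^ e₂ ≤ x ^ e₁ * C := by nlinarith
      _ = C * x ^ e₁ := by ring
  have half2 : IntervalIntegrable (fun x : ℝ => x ^ e₁ * (1 - x) ^ e₂) volume (1/2) 1 := by
    set C : ℝ := max 1 ((1/2 : ℝ) ^ e₁) with hC
    have hC0 : 0 ≤ C := le_trans zero_le_one (le_max_left _ _)
    have base : IntervalIntegrable (fun x : ℝ => C * (1 - x) ^ e₂) volume (1/2) 1 := by
      have := (intervalIntegrable_rpow' h₂ (a := 1/2) (b := 0)).comp_sub_left 1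
      norm_num at this
      exact this.const_mul C
    refine base.mono_fun (hmeas _ _) ?_
    filter_upwards [ae_restrict_mem measurableSet_uIoc] with x hx
    rw [uIoc_of_le (by norm_num : (1/2:ℝ) ≤ 1)] at hx
    have hx0 : 1/2 < x := hx.1
    have hx2 : x ≤ 1 := hx.2
    have hbound : x ^ e₁ ≤ C := by
      rcases le_total 0 e₁ with h | h
      · calc x ^ e₁ ≤ 1 ^ e₁ := by
              apply Real.rpow_le_rpow (by linarith) (by linarith) h
          _ = 1 := Real.one_rpow _
          _ ≤ C := le_max_left _ _
      · calc x ^ e₁ ≤ (1/2 : ℝ) ^ e₁ := by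
              apply Real.rpow_le_rpow_of_nonpos (by norm_num) (by linarith) h
          _ ≤ C := le_max_right _ _
    have h1x : 0 ≤ (1 - x) ^ e₂ := Real.rpow_nonneg (by linarith) _
    have hxe : 0 ≤ x ^ e₁ := Real.rpow_nonneg (by linarith) _
    simp only [Real.norm_eq_abs, abs_of_nonneg (mul_nonneg hxe h1x),
      abs_of_nonneg (mul_nonneg hC0 h1x)]
    nlinarith
  exact half.trans half2

noncomputable def Hf (p q s : ℝ) : ℝ :=
  4 * ((s ^ ((5-p)/4) - s ^ ((7-3*p)/4)) * (1 - s ^ ((q-p)/2)) ^ (-(1/2) : ℝ))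

noncomputable def phiF (p q s : ℝ) : ℝ :=
  (-(5 - p) * (1 - s ^ ((p - 1)/2)) + (5 - q) * (1 - s ^ ((q - 1)/2)))
    / (s ^ ((p - 1)/2) - s ^ ((q - 1)/2)) ^ ((3:ℝ)/2)

noncomputable def psiF (p q s : ℝ) : ℝ :=
  ((q-p)/2) * s ^ ((7-3*p)/4 - 1) * (1 - s ^ ((q-p)/2)) ^ (-(1/2) : ℝ)

lemma hasDeriv_Hf {p q : ℝ} (hp : 1 < p) (hpq : p < q) {s : ℝ} (hs : s ∈ Ioo (0:ℝ) 1) :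
    HasDerivAt (Hf p q) (phiF p q s - (2*(7-2*p-q)/(q-p)) * psiF p q s) s := by
  obtain ⟨hs0, hs1⟩ := hs
  have hqp : 0 < q - p := by linarith
  have hr : 0 < (q-p)/2 := by linarith
  have hv1 : s ^ ((q-p)/2) < 1 := Real.rpow_lt_one hs0.le hs1 hr
  have hw : 0 < 1 - s ^ ((q-p)/2) := by linarith
  have d1 : HasDerivAt (fun s : ℝ => s ^ ((5-p)/4) - s ^ ((7-3*p)/4))
      ((5-p)/4 * s ^ ((5-p)/4 - 1) - (7-3*p)/4 * s ^ ((7-3*p)/4 - 1)) s :=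
    (Real.hasDerivAt_rpow_const (Or.inl hs0.ne')).sub
      (Real.hasDerivAt_rpow_const (Or.inl hs0.ne'))
  have d2 : HasDerivAt (fun s : ℝ => 1 - s ^ ((q-p)/2))
      (-( (q-p)/2 * s ^ ((q-p)/2 - 1))) s :=
    ((Real.hasDerivAt_rpow_const (Or.inl hs0.ne'))).const_sub 1
  have d3 : HasDerivAt (fun s : ℝ => (1 - s ^ ((q-p)/2)) ^ (-(1/2) : ℝ))
      ((-( (q-p)/2 * s ^ ((q-p)/2 - 1))) * (-(1/2)) *
        (1 - s ^ ((q-p)/2)) ^ (-(1/2) - 1 : ℝ)) s :=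
    d2.rpow_const (Or.inl hw.ne')
  have d4 := (d1.mul d3).const_mul (4:ℝ)
  have hEq : phiF p q s - (2*(7-2*p-q)/(q-p)) * psiF p q s =
      4 * (((5-p)/4 * s ^ ((5-p)/4 - 1) - (7-3*p)/4 * s ^ ((7-3*p)/4 - 1)) *
            (1 - s ^ ((q-p)/2)) ^ (-(1/2) : ℝ) +
          (s ^ ((5-p)/4) - s ^ ((7-3*p)/4)) *
            ((-( (q-p)/2 * s ^ ((q-p)/2 - 1))) * (-(1/2)) *
              (1 - s ^ ((q-p)/2)) ^ (-(1/2) - 1 : ℝ))) := by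
    have hmdef : True := trivial
    set v : ℝ := s ^ ((q-p)/2) with hvdef
    set m : ℝ := s ^ ((p-1)/4) with hmdef2
    set W : ℝ := (1 - v) ^ ((1:ℝ)/2) with hWdef
    have hm : 0 < m := Real.rpow_pos_of_pos hs0 _
    have hW : 0 < W := Real.rpow_pos_of_pos hw _
    have hmm : m * m = s ^ ((p-1)/2) := by
      rw [hmdef2, ← Real.rpow_add hs0]; congr 1; ring
    have hmmm : m * m * m = s ^ (3*(p-1)/4) := by
      rw [hmdef2, ← Real.rpow_add hs0, ← Real.rpow_add hs0]; congr 1; ring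
    have hb' : s ^ ((q-1)/2) = m * m * v := by
      rw [hmdef2, hvdef, ← Real.rpow_add hs0, ← Real.rpow_add hs0]; congr 1; ring
    have hB' : s ^ ((5-p)/4) = s / m := by
      rw [eq_div_iff hm.ne', hmdef2, ← Real.rpow_add hs0,
        show (5-p)/4 + (p-1)/4 = (1:ℝ) by ring, Real.rpow_one]
    have hB1' : s ^ ((5-p)/4 - 1) = 1 / m := by
      rw [eq_div_iff hm.ne', hmdef2, ← Real.rpow_add hs0,
        show (5-p)/4 - 1 + (p-1)/4 = (0:ℝ) by ring, Real.rpow_zero]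
    have hA' : s ^ ((7-3*p)/4) = s / (m * m * m) := by
      rw [eq_div_iff (by positivity : (m*m*m) ≠ 0), hmmm, ← Real.rpow_add hs0,
        show (7-3*p)/4 + 3*(p-1)/4 = (1:ℝ) by ring, Real.rpow_one]
    have hA1' : s ^ ((7-3*p)/4 - 1) = 1 / (m * m * m) := by
      rw [eq_div_iff (by positivity : (m*m*m) ≠ 0), hmmm, ← Real.rpow_add hs0,
        show (7-3*p)/4 - 1 + 3*(p-1)/4 = (0:ℝ) by ring, Real.rpow_zero]
    have hr1' : s ^ ((q-p)/2 - 1) = v / s := by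
      rw [eq_div_iff hs0.ne']
      nth_rewrite 2 [← Real.rpow_one s]
      rw [← Real.rpow_add hs0, hvdef]; congr 1; ring
    have hW3 : W * W * W = (1 - v) ^ ((3:ℝ)/2) := by
      rw [hWdef, ← Real.rpow_add hw, ← Real.rpow_add hw]; congr 1; norm_num
    have hw12 : (1 - v) ^ (-(1/2) : ℝ) = (1 - v) / (W * W * W) := by
      rw [eq_div_iff (by positivity : (W*W*W) ≠ 0), hW3, ← Real.rpow_add hw,
        show (-(1/2) + (3:ℝ)/2) = 1 by norm_num, Real.rpow_one]
    have hw32 : (1 - v) ^ (-(1/2) - 1 : ℝ) = 1 / (W * W * W) := by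
      rw [eq_div_iff (by positivity : (W*W*W) ≠ 0), hW3, ← Real.rpow_add hw,
        show (-(1/2) - 1 + (3:ℝ)/2) = 0 by norm_num, Real.rpow_zero]
    have hden : (s ^ ((p - 1)/2) - s ^ ((q - 1)/2)) ^ ((3:ℝ)/2)
        = (m * m * m) * (W * W * W) := by
      have h2 : s ^ ((p - 1)/2) - s ^ ((q - 1)/2) = s ^ ((p-1)/2) * (1 - v) := by
        rw [hb', ← hmm]; ring
      rw [h2, Real.mul_rpow (Real.rpow_nonneg hs0.le _) hw.le, hW3, ← Real.rpow_mul hs0.le,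
        hmmm]
      congr 2; ring
    simp only [phiF, psiF]
    rw [hden, hb', hA1', hB1', hA', hB', hr1', hw12, hw32, ← hmm]
    have hqp' : q - p ≠ 0 := hqp.ne'
    field_simp
    ring
  rw [hEq]
  exact d4

lemma Hf_zero {p q : ℝ} (hp : 1 < p) (hp73 : p < 7/3) : Hf p q 0 = 0 := by
  rw [Hf, Real.zero_rpow (ne_of_gt (by linarith : (0:ℝ) < (5-p)/4)),
    Real.zero_rpow (ne_of_gt (by linarith : (0:ℝ) < (7-3*p)/4))]
  ring

lemma Hf_one {p q : ℝ} : Hf p q 1 = 0 := by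
  rw [Hf, Real.one_rpow, Real.one_rpow]
  ring

lemma Hf_bound {p q : ℝ} (hp : 1 < p) (hpq : p < q) (hp73 : p < 7/3) {y : ℝ}
    (h0 : 0 ≤ y) (h1 : y ≤ 1) :
    ‖Hf p q y‖ ≤ (4 * max ((p-1)/2) 1 * (min ((q-p)/2) 1) ^ (-(1/2) : ℝ)) *
      (1 - y) ^ ((1:ℝ)/2) := by
  have ha : 0 < (p-1)/2 := by linarith
  have hr : 0 < (q-p)/2 := by linarith
  have hc₀ : 0 < min ((q-p)/2) 1 := lt_min hr one_pos
  have hK0 : 0 ≤ 4 * max ((p-1)/2) 1 * (min ((q-p)/2) 1) ^ (-(1/2) : ℝ) := by positivity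
  rcases eq_or_lt_of_le h1 with rfl | h1'
  · rw [Hf_one, sub_self, Real.zero_rpow (by norm_num), norm_zero, mul_zero]
  have hv1 : y ^ ((q-p)/2) < 1 := Real.rpow_lt_one h0 h1' hr
  have hw : 0 < 1 - y ^ ((q-p)/2) := by linarith
  have hy1 : 0 < 1 - y := by linarith
  -- bound on the difference of powers
  have key1 : |y ^ ((5-p)/4) - y ^ ((7-3*p)/4)| ≤ max ((p-1)/2) 1 * (1 - y) := by
    rcases eq_or_lt_of_le h0 with rfl | h0'
    · rw [Real.zero_rpow (ne_of_gt (by linarith : (0:ℝ) < (5-p)/4)),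
        Real.zero_rpow (ne_of_gt (by linarith : (0:ℝ) < (7-3*p)/4)), sub_self, abs_zero]
      positivity
    have hsplit : y ^ ((5-p)/4) = y ^ ((7-3*p)/4) * y ^ ((p-1)/2) := by
      rw [← Real.rpow_add h0']; congr 1; ring
    have hA1 : y ^ ((7-3*p)/4) ≤ 1 := Real.rpow_le_one h0 h1 (by linarith)
    have hA0 : 0 ≤ y ^ ((7-3*p)/4) := Real.rpow_nonneg h0 _
    have haux : y ^ ((p-1)/2) ≤ 1 := Real.rpow_le_one h0 h1 ha.le
    have hbern := one_sub_rpow_le ha h0 h1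
    rw [hsplit, abs_of_nonpos (by nlinarith [Real.rpow_nonneg h0 ((p-1)/2)])]
    have : y ^ ((7-3*p)/4) * y ^ ((p-1)/2) - y ^ ((7-3*p)/4)
        = -(y ^ ((7-3*p)/4) * (1 - y ^ ((p-1)/2))) := by ring
    rw [show -(y ^ ((7-3*p)/4) * y ^ ((p-1)/2) - y ^ ((7-3*p)/4))
        = y ^ ((7-3*p)/4) * (1 - y ^ ((p-1)/2)) by ring]
    calc y ^ ((7-3*p)/4) * (1 - y ^ ((p-1)/2)) ≤ 1 * (1 - y ^ ((p-1)/2)) := by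
          apply mul_le_mul_of_nonneg_right hA1 (by linarith)
      _ = 1 - y ^ ((p-1)/2) := one_mul _
      _ ≤ max ((p-1)/2) 1 * (1 - y) := hbern
  -- bound on the singular factor
  have key2 : (1 - y ^ ((q-p)/2)) ^ (-(1/2) : ℝ) ≤
      (min ((q-p)/2) 1) ^ (-(1/2) : ℝ) * (1 - y) ^ (-(1/2) : ℝ) := by
    have hlow : min ((q-p)/2) 1 * (1 - y) ≤ 1 - y ^ ((q-p)/2) := le_one_sub_rpow hr h0 h1
    have hpos : 0 < min ((q-p)/2) 1 * (1 - y) := by positivity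
    calc (1 - y ^ ((q-p)/2)) ^ (-(1/2) : ℝ)
        ≤ (min ((q-p)/2) 1 * (1 - y)) ^ (-(1/2) : ℝ) :=
          Real.rpow_le_rpow_of_nonpos hpos hlow (by norm_num)
      _ = (min ((q-p)/2) 1) ^ (-(1/2) : ℝ) * (1 - y) ^ (-(1/2) : ℝ) :=
          Real.mul_rpow hc₀.le hy1.le
  have hwnn : 0 ≤ (1 - y ^ ((q-p)/2)) ^ (-(1/2) : ℝ) := Real.rpow_nonneg hw.le _
  have habs : ‖Hf p q y‖ = 4 * (|y ^ ((5-p)/4) - y ^ ((7-3*p)/4)| *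
      (1 - y ^ ((q-p)/2)) ^ (-(1/2) : ℝ)) := by
    rw [Hf, Real.norm_eq_abs, abs_mul, abs_mul, abs_of_nonneg hwnn]
    norm_num
  rw [habs]
  have step : |y ^ ((5-p)/4) - y ^ ((7-3*p)/4)| * (1 - y ^ ((q-p)/2)) ^ (-(1/2) : ℝ)
      ≤ (max ((p-1)/2) 1 * (1 - y)) *
        ((min ((q-p)/2) 1) ^ (-(1/2) : ℝ) * (1 - y) ^ (-(1/2) : ℝ)) := by
    apply mul_le_mul key1 key2 hwnn (by positivity)
  have hfin : (1 - y) * (1 - y) ^ (-(1/2) : ℝ) = (1 - y) ^ ((1:ℝ)/2) := by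
    nth_rewrite 1 [← Real.rpow_one (1-y)]
    rw [← Real.rpow_add hy1]; congr 1; norm_num
  calc 4 * (|y ^ ((5-p)/4) - y ^ ((7-3*p)/4)| * (1 - y ^ ((q-p)/2)) ^ (-(1/2) : ℝ))
      ≤ 4 * ((max ((p-1)/2) 1 * (1 - y)) *
        ((min ((q-p)/2) 1) ^ (-(1/2) : ℝ) * (1 - y) ^ (-(1/2) : ℝ))) := by linarith
    _ = (4 * max ((p-1)/2) 1 * (min ((q-p)/2) 1) ^ (-(1/2) : ℝ)) *
        ((1 - y) * (1 - y) ^ (-(1/2) : ℝ)) := by ring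
    _ = _ := by rw [hfin]

lemma contOn_Hf {p q : ℝ} (hp : 1 < p) (hpq : p < q) (hp73 : p < 7/3) :
    ContinuousOn (Hf p q) (Icc (0:ℝ) 1) := by
  have ha : 0 < (p-1)/2 := by linarith
  have hr : 0 < (q-p)/2 := by linarith
  intro x hx
  obtain ⟨hx0, hx1⟩ := hx
  rcases eq_or_lt_of_le hx1 with rfl | hx1'
  · -- continuity at 1 via squeeze
    have hHone : Hf p q 1 = 0 := Hf_one
    rw [ContinuousWithinAt, hHone]
    apply squeeze_zero_norm' (a := fun y : ℝ =>
      (4 * max ((p-1)/2) 1 * (min ((q-p)/2) 1) ^ (-(1/2) : ℝ)) * (1 - y) ^ ((1:ℝ)/2))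
    · filter_upwards [self_mem_nhdsWithin] with y hy
      exact Hf_bound hp hpq hp73 hy.1 hy.2
    · have hcont : ContinuousAt (fun y : ℝ =>
          (4 * max ((p-1)/2) 1 * (min ((q-p)/2) 1) ^ (-(1/2) : ℝ)) * (1 - y) ^ ((1:ℝ)/2)) 1 := by
        apply ContinuousAt.mul continuousAt_const
        apply ContinuousAt.comp' (g := fun z : ℝ => z ^ ((1:ℝ)/2))
        · exact Real.continuousAt_rpow_const _ _ (Or.inr (by norm_num))
        · exact continuousAt_const.sub continuousAt_id
      have := hcont.continuousWithinAt (s := Icc (0:ℝ) 1)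
      rw [ContinuousWithinAt] at this
      convert this using 2
      rw [sub_self, Real.zero_rpow (by norm_num), mul_zero]
  · -- continuity at points < 1
    have hv1 : x ^ ((q-p)/2) < 1 := Real.rpow_lt_one hx0 hx1' hr
    have hw : (0:ℝ) < 1 - x ^ ((q-p)/2) := by linarith
    apply ContinuousAt.continuousWithinAt
    apply ContinuousAt.mul continuousAt_const
    apply ContinuousAt.mul
    · exact (Real.continuousAt_rpow_const _ _ (Or.inr (by linarith))).sub
        (Real.continuousAt_rpow_const _ _ (Or.inr (by linarith)))
    · apply ContinuousAt.comp' (g := fun z : ℝ => z ^ (-(1/2) : ℝ))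
      · exact Real.continuousAt_rpow_const _ _ (Or.inl hw.ne')
      · exact continuousAt_const.sub (Real.continuousAt_rpow_const _ _ (Or.inr hr.le))

lemma psiF_integrable {p q : ℝ} (hp : 1 < p) (hpq : p < q) (hp73 : p < 7/3) :
    IntervalIntegrable (psiF p q) volume 0 1 := by
  have hr : 0 < (q-p)/2 := by linarith
  have hc₀ : 0 < min ((q-p)/2) 1 := lt_min hr one_pos
  have hK0 : 0 ≤ (q-p)/2 * (min ((q-p)/2) 1) ^ (-(1/2) : ℝ) := by positivity
  have hbase : IntervalIntegrable (fun x : ℝ =>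
      ((q-p)/2 * (min ((q-p)/2) 1) ^ (-(1/2) : ℝ)) *
        (x ^ ((7-3*p)/4 - 1) * (1 - x) ^ (-(1/2) : ℝ))) volume 0 1 :=
    (beta_type_integrable (by linarith) (by norm_num)).const_mul _
  refine hbase.mono_fun ?_ ?_
  · have : Measurable (psiF p q) := by unfold psiF; fun_prop
    exact this.aestronglyMeasurable
  filter_upwards [ae_restrict_mem measurableSet_uIoc] with x hx
  rw [uIoc_of_le (by norm_num : (0:ℝ) ≤ 1)] at hx
  obtain ⟨hx0, hx1⟩ := hx
  have hxA : 0 ≤ x ^ ((7-3*p)/4 - 1) := Real.rpow_nonneg hx0.le _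
  rcases eq_or_lt_of_le hx1 with rfl | hx1'
  · have h10 : psiF p q 1 = 0 := by
      rw [psiF, Real.one_rpow, Real.one_rpow, sub_self,
        Real.zero_rpow (by norm_num : (-(1/2):ℝ) ≠ 0), mul_zero]
    rw [h10, norm_zero]
    exact norm_nonneg _
  have hv1 : x ^ ((q-p)/2) < 1 := Real.rpow_lt_one hx0.le hx1' hr
  have hw : (0:ℝ) < 1 - x ^ ((q-p)/2) := by linarith
  have hy1 : (0:ℝ) < 1 - x := by linarith
  have key2 : (1 - x ^ ((q-p)/2)) ^ (-(1/2) : ℝ) ≤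
      (min ((q-p)/2) 1) ^ (-(1/2) : ℝ) * (1 - x) ^ (-(1/2) : ℝ) := by
    have hlow : min ((q-p)/2) 1 * (1 - x) ≤ 1 - x ^ ((q-p)/2) :=
      le_one_sub_rpow hr hx0.le hx1
    calc (1 - x ^ ((q-p)/2)) ^ (-(1/2) : ℝ)
        ≤ (min ((q-p)/2) 1 * (1 - x)) ^ (-(1/2) : ℝ) :=
          Real.rpow_le_rpow_of_nonpos (by positivity) hlow (by norm_num)
      _ = _ := Real.mul_rpow hc₀.le hy1.le
  have hpsi : ‖psiF p q x‖ = (q-p)/2 * x ^ ((7-3*p)/4 - 1) *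
      (1 - x ^ ((q-p)/2)) ^ (-(1/2) : ℝ) := by
    rw [psiF, Real.norm_eq_abs, abs_of_nonneg (by positivity)]
  rw [hpsi, Real.norm_eq_abs, abs_of_nonneg (by positivity)]
  calc (q-p)/2 * x ^ ((7-3*p)/4 - 1) * (1 - x ^ ((q-p)/2)) ^ (-(1/2) : ℝ)
      ≤ (q-p)/2 * x ^ ((7-3*p)/4 - 1) *
        ((min ((q-p)/2) 1) ^ (-(1/2) : ℝ) * (1 - x) ^ (-(1/2) : ℝ)) := by
        apply mul_le_mul_of_nonneg_left key2 (by positivity)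
    _ = (q-p)/2 * (min ((q-p)/2) 1) ^ (-(1/2) : ℝ) *
        (x ^ ((7-3*p)/4 - 1) * (1 - x) ^ (-(1/2) : ℝ)) := by ring

lemma phiF_integrable {p q : ℝ} (hp : 1 < p) (hpq : p < q) (hp73 : p < 7/3) :
    IntervalIntegrable (phiF p q) volume 0 1 := by
  have ha : 0 < (p-1)/2 := by linarith
  have hb : 0 < (q-1)/2 := by linarith
  have hr : 0 < (q-p)/2 := by linarith
  have hc₀ : 0 < min ((q-p)/2) 1 := lt_min hr one_pos
  set K₁ : ℝ := |5-p| * max ((p-1)/2) 1 + |5-q| * max ((q-1)/2) 1 with hK₁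
  have hK₁0 : 0 ≤ K₁ := by positivity
  set K : ℝ := K₁ * (min ((q-p)/2) 1) ^ (-(3/2) : ℝ) with hK
  have hK0 : 0 ≤ K := by positivity
  have hbase : IntervalIntegrable (fun x : ℝ =>
      K * (x ^ (-(3*(p-1)/4)) * (1 - x) ^ (-(1/2) : ℝ))) volume 0 1 :=
    (beta_type_integrable (by linarith) (by norm_num)).const_mul _
  refine hbase.mono_fun ?_ ?_
  · have : Measurable (phiF p q) := by unfold phiF; fun_prop
    exact this.aestronglyMeasurable
  filter_upwards [ae_restrict_mem measurableSet_uIoc] with x hx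
  rw [uIoc_of_le (by norm_num : (0:ℝ) ≤ 1)] at hx
  obtain ⟨hx0, hx1⟩ := hx
  have hRHSnn : (0:ℝ) ≤ K * (x ^ (-(3*(p-1)/4)) * (1 - x) ^ (-(1/2) : ℝ)) :=
    mul_nonneg hK0 (mul_nonneg (Real.rpow_nonneg hx0.le _) (Real.rpow_nonneg (by linarith) _))
  rcases eq_or_lt_of_le hx1 with rfl | hx1'
  · have h10 : phiF p q 1 = 0 := by
      rw [phiF, Real.one_rpow, Real.one_rpow, sub_self,
        Real.zero_rpow (by norm_num : ((3:ℝ)/2) ≠ 0), div_zero]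
    rw [h10, norm_zero]
    exact norm_nonneg _
  have hv1 : x ^ ((q-p)/2) < 1 := Real.rpow_lt_one hx0.le hx1' hr
  have hw : (0:ℝ) < 1 - x ^ ((q-p)/2) := by linarith
  have hy1 : (0:ℝ) < 1 - x := by linarith
  -- numerator bound
  have hup : ∀ e : ℝ, 0 < e → 0 ≤ 1 - x ^ e ∧ 1 - x ^ e ≤ max e 1 * (1-x) := by
    intro e he
    constructor
    · have := Real.rpow_le_one hx0.le hx1 he.le; linarith
    · exact one_sub_rpow_le he hx0.le hx1
  have hnum : |(-(5 - p) * (1 - x ^ ((p - 1)/2)) + (5 - q) * (1 - x ^ ((q - 1)/2)))|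
      ≤ K₁ * (1 - x) := by
    obtain ⟨h1a, h2a⟩ := hup _ ha
    obtain ⟨h1b, h2b⟩ := hup _ hb
    calc |(-(5 - p) * (1 - x ^ ((p - 1)/2)) + (5 - q) * (1 - x ^ ((q - 1)/2)))|
        ≤ |(-(5 - p)) * (1 - x ^ ((p - 1)/2))| + |(5 - q) * (1 - x ^ ((q - 1)/2))| :=
          abs_add_le _ _
      _ = |5-p| * (1 - x ^ ((p - 1)/2)) + |5-q| * (1 - x ^ ((q - 1)/2)) := by
          rw [abs_mul, abs_mul, abs_neg, abs_of_nonneg h1a, abs_of_nonneg h1b]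
      _ ≤ |5-p| * (max ((p-1)/2) 1 * (1-x)) + |5-q| * (max ((q-1)/2) 1 * (1-x)) := by
          have := abs_nonneg (5-p); have := abs_nonneg (5-q)
          apply add_le_add <;> apply mul_le_mul_of_nonneg_left (by assumption) (by positivity)
      _ = K₁ * (1 - x) := by rw [hK₁]; ring
  -- denominator lower bound
  have hsplit : x ^ ((q-1)/2) = x ^ ((p-1)/2) * x ^ ((q-p)/2) := by
    rw [← Real.rpow_add hx0]; congr 1; ring
  have hdpos : (0:ℝ) < x ^ ((p-1)/2) * (1 - x ^ ((q-p)/2)) := by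
    have := Real.rpow_pos_of_pos hx0 ((p-1)/2); positivity
  have hden : (x ^ ((p - 1)/2) - x ^ ((q - 1)/2)) ^ ((3:ℝ)/2)
      = x ^ (3*(p-1)/4) * (1 - x ^ ((q-p)/2)) ^ ((3:ℝ)/2) := by
    rw [show x ^ ((p - 1)/2) - x ^ ((q - 1)/2) = x ^ ((p-1)/2) * (1 - x ^ ((q-p)/2)) by
        rw [hsplit]; ring,
      Real.mul_rpow (Real.rpow_nonneg hx0.le _) hw.le, ← Real.rpow_mul hx0.le]
    congr 2; ring
  have hdlow : x ^ (3*(p-1)/4) * (min ((q-p)/2) 1 * (1-x)) ^ ((3:ℝ)/2)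
      ≤ (x ^ ((p - 1)/2) - x ^ ((q - 1)/2)) ^ ((3:ℝ)/2) := by
    rw [hden]
    apply mul_le_mul_of_nonneg_left _ (Real.rpow_nonneg hx0.le _)
    apply Real.rpow_le_rpow (by positivity) (le_one_sub_rpow hr hx0.le hx1) (by norm_num)
  have hdlowpos : (0:ℝ) < x ^ (3*(p-1)/4) * (min ((q-p)/2) 1 * (1-x)) ^ ((3:ℝ)/2) := by
    have := Real.rpow_pos_of_pos hx0 (3*(p-1)/4)
    have : (0:ℝ) < (min ((q-p)/2) 1 * (1-x)) ^ ((3:ℝ)/2) :=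
      Real.rpow_pos_of_pos (by positivity) _
    positivity
  -- combine
  rw [Real.norm_eq_abs, Real.norm_eq_abs, phiF, abs_div,
    abs_of_nonneg (le_of_lt (lt_of_lt_of_le hdlowpos hdlow)), abs_of_nonneg hRHSnn]
  have step1 : |(-(5 - p) * (1 - x ^ ((p - 1)/2)) + (5 - q) * (1 - x ^ ((q - 1)/2)))| /
      (x ^ ((p - 1)/2) - x ^ ((q - 1)/2)) ^ ((3:ℝ)/2)
      ≤ (K₁ * (1-x)) / (x ^ (3*(p-1)/4) * (min ((q-p)/2) 1 * (1-x)) ^ ((3:ℝ)/2)) := by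
    exact div_le_div₀ (by positivity) hnum hdlowpos hdlow
  refine le_trans step1 (le_of_eq ?_)
  set c₀ : ℝ := min ((q-p)/2) 1 with hc₀def
  set u : ℝ := (1-x) ^ ((1:ℝ)/2) with hudef
  have hu : 0 < u := Real.rpow_pos_of_pos hy1 _
  have huu : u * u = 1 - x := by
    rw [hudef, ← Real.rpow_add hy1, show (1:ℝ)/2 + 1/2 = 1 by norm_num, Real.rpow_one]
  have hu3 : (1-x) ^ ((3:ℝ)/2) = u * u * u := by
    rw [hudef, ← Real.rpow_add hy1, ← Real.rpow_add hy1]; congr 1; norm_num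
  have hXpos : 0 < x ^ (3*(p-1)/4) := Real.rpow_pos_of_pos hx0 _
  have hXneg : x ^ (-(3*(p-1)/4)) = (x ^ (3*(p-1)/4))⁻¹ := by
    rw [Real.rpow_neg hx0.le]
  have hCpos : 0 < c₀ ^ ((3:ℝ)/2) := Real.rpow_pos_of_pos hc₀ _
  have hCneg : c₀ ^ (-(3/2) : ℝ) = (c₀ ^ ((3:ℝ)/2))⁻¹ := by
    rw [show (-(3/2) : ℝ) = -((3:ℝ)/2) by norm_num, Real.rpow_neg hc₀.le]
  have huneg : (1-x) ^ (-(1/2) : ℝ) = u⁻¹ := by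
    rw [hudef, show (-(1/2) : ℝ) = -((1:ℝ)/2) by norm_num, Real.rpow_neg hy1.le]
  have hsplit2 : (c₀ * (1-x)) ^ ((3:ℝ)/2) = c₀ ^ ((3:ℝ)/2) * (u * u * u) := by
    rw [Real.mul_rpow hc₀.le hy1.le, hu3]
  rw [hsplit2, hK, hCneg, hXneg, huneg, ← huu]
  field_simp

lemma ftc_part {p q : ℝ} (hp : 1 < p) (hpq : p < q) (hp73 : p < 7/3) :
    ∫ s in (0:ℝ)..1, (phiF p q s - (2*(7-2*p-q)/(q-p)) * psiF p q s) = 0 := by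
  have h := intervalIntegral.integral_eq_sub_of_hasDeriv_right_of_le zero_le_one
    (contOn_Hf hp hpq hp73)
    (fun x hx => (hasDeriv_Hf hp hpq hx).hasDerivWithinAt)
    ((phiF_integrable hp hpq hp73).sub
      ((psiF_integrable hp hpq hp73).const_mul (2*(7-2*p-q)/(q-p))))
  rw [h, Hf_one, Hf_zero hp hp73, sub_zero]

lemma psi_integral {p q : ℝ} (hp : 1 < p) (hpq : p < q) (hp73 : p < 7/3) :
    ∫ s in (0:ℝ)..1, psiF p q s = betaReal ((7 - 3*p) / (2*(q - p))) (1/2) := by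
  have hqp : (0:ℝ) < q - p := by linarith
  have hr : 0 < (q-p)/2 := by linarith
  set α : ℝ := (7 - 3*p) / (2*(q - p)) with hα
  have hα0 : 0 < α := by apply div_pos <;> linarith
  set g : ℝ → ℝ := fun t => t ^ (α - 1) * (1 - t) ^ ((1:ℝ)/2 - 1) with hg
  set f : ℝ → ℝ := fun x => x ^ ((q-p)/2) with hf
  set f' : ℝ → ℝ := fun x => ((q-p)/2) * x ^ ((q-p)/2 - 1) with hf'
  have hfcont : ContinuousOn f (uIcc (0:ℝ) 1) :=
    (continuous_iff_continuousAt.mpr fun x =>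
      Real.continuousAt_rpow_const x _ (Or.inr hr.le)).continuousOn
  have hff' : ∀ x ∈ Ioo (min (0:ℝ) 1) (max (0:ℝ) 1),
      HasDerivWithinAt f (f' x) (Ioi x) x := by
    intro x hx
    rw [min_eq_left zero_le_one, max_eq_right zero_le_one] at hx
    exact (Real.hasDerivAt_rpow_const (Or.inl hx.1.ne')).hasDerivWithinAt
  have himg : f '' Ioo (min (0:ℝ) 1) (max (0:ℝ) 1) ⊆ Ioo 0 1 := by
    rw [min_eq_left zero_le_one, max_eq_right zero_le_one]
    rintro _ ⟨x, hx, rfl⟩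
    exact ⟨Real.rpow_pos_of_pos hx.1 _, Real.rpow_lt_one hx.1.le hx.2 hr⟩
  have hgInt : IntegrableOn g (Icc (0:ℝ) 1) := by
    have := beta_type_integrable (e₁ := α - 1) (e₂ := (1:ℝ)/2 - 1)
      (by linarith) (by norm_num)
    rw [intervalIntegrable_iff_integrableOn_Icc_of_le zero_le_one] at this
    exact this
  have hgcont : ContinuousOn g (f '' Ioo (min (0:ℝ) 1) (max (0:ℝ) 1)) := by
    refine ContinuousOn.mono ?_ himg
    intro t ht
    apply ContinuousWithinAt.mul
    · exact (Real.continuousAt_rpow_const _ _ (Or.inl ht.1.ne')).continuousWithinAt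
    · apply ContinuousAt.continuousWithinAt
      apply ContinuousAt.comp' (g := fun z : ℝ => z ^ ((1:ℝ)/2 - 1))
      · exact Real.continuousAt_rpow_const _ _ (Or.inl (by intro h; nlinarith [ht.2] : 1 - t ≠ 0))
      · exact continuousAt_const.sub continuousAt_id
  have himg2 : f '' (uIcc (0:ℝ) 1) ⊆ Icc 0 1 := by
    rw [uIcc_of_le zero_le_one]
    rintro _ ⟨x, hx, rfl⟩
    exact ⟨Real.rpow_nonneg hx.1 _, Real.rpow_le_one hx.1 hx.2 hr.le⟩
  have hg1 : IntegrableOn g (f '' (uIcc (0:ℝ) 1)) := hgInt.mono_set himg2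
  -- the substituted integrand agrees with psiF on (0, 1]
  have hpt : ∀ x : ℝ, x ∈ Ioc (0:ℝ) 1 → f' x • (g ∘ f) x = psiF p q x := by
    intro x hx
    have hx0 : 0 < x := hx.1
    simp only [hf', hg, hf, Function.comp, smul_eq_mul]
    rw [← Real.rpow_mul hx0.le, show ((1:ℝ)/2 - 1) = (-(1/2) : ℝ) by norm_num]
    rw [psiF]
    rw [show (q-p)/2 * x ^ ((q-p)/2 - 1) * (x ^ ((q-p)/2 * (α - 1)) *
        (1 - x ^ ((q-p)/2)) ^ (-(1/2) : ℝ))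
      = (q-p)/2 * (x ^ ((q-p)/2 - 1) * x ^ ((q-p)/2 * (α - 1))) *
        (1 - x ^ ((q-p)/2)) ^ (-(1/2) : ℝ) by ring]
    rw [← Real.rpow_add hx0]
    have hexp : (q-p)/2 - 1 + (q-p)/2 * (α - 1) = (7-3*p)/4 - 1 := by
      rw [hα]
      field_simp
      ring
    rw [hexp]
  have hg2 : IntegrableOn (fun x => f' x • (g ∘ f) x) (uIcc (0:ℝ) 1) := by
    rw [uIcc_of_le zero_le_one, integrableOn_Icc_iff_integrableOn_Ioo]
    have hψ : IntegrableOn (psiF p q) (Ioo (0:ℝ) 1) := by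
      have := psiF_integrable hp hpq hp73
      rw [intervalIntegrable_iff_integrableOn_Ioo_of_le zero_le_one] at this
      exact this
    apply hψ.congr
    filter_upwards [ae_restrict_mem measurableSet_Ioo] with x hx
    exact (hpt x ⟨hx.1, hx.2.le⟩).symm
  have hsub := intervalIntegral.integral_comp_smul_deriv''' hfcont hff' hgcont hg1 hg2
  have hL : ∫ x in (0:ℝ)..1, f' x • (g ∘ f) x = ∫ s in (0:ℝ)..1, psiF p q s := by
    apply intervalIntegral.integral_congr_ae
    apply Filter.Eventually.of_forall
    intro x hx
    rw [uIoc_of_le zero_le_one] at hx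
    exact hpt x hx
  have hends : f 0 = 0 ∧ f 1 = 1 := by
    constructor
    · simp only [hf]; exact Real.zero_rpow hr.ne'
    · simp only [hf]; exact Real.one_rpow _
  rw [← hL, hsub, hends.1, hends.2]
  rfl

theorem two_power_integral (p q : ℝ) (hp : 1 < p) (hpq : p < q) (hp73 : p < 7/3) :
    (∫ s in (0:ℝ)..1,
        (-(5 - p) * (1 - s ^ ((p - 1)/2)) + (5 - q) * (1 - s ^ ((q - 1)/2)))
          / (s ^ ((p - 1)/2) - s ^ ((q - 1)/2)) ^ ((3:ℝ)/2))
      = 2 * ((7 - 2*p - q) / (q - p)) * betaReal ((7 - 3*p) / (2*(q - p))) (1/2) := by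
  set c : ℝ := 2*(7-2*p-q)/(q-p) with hc
  have h1 : IntervalIntegrable (fun s => phiF p q s - c * psiF p q s) volume 0 1 :=
    (phiF_integrable hp hpq hp73).sub ((psiF_integrable hp hpq hp73).const_mul c)
  have h2 : IntervalIntegrable (fun s => c * psiF p q s) volume 0 1 :=
    (psiF_integrable hp hpq hp73).const_mul c
  have key : (∫ s in (0:ℝ)..1, phiF p q s)
      = (∫ s in (0:ℝ)..1, (phiF p q s - c * psiF p q s))
        + ∫ s in (0:ℝ)..1, c * psiF p q s := by
    rw [← intervalIntegral.integral_add h1 h2]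
    congr 1
    funext s
    ring
  have : (∫ s in (0:ℝ)..1, phiF p q s)
      = c * betaReal ((7 - 3*p) / (2*(q - p))) (1/2) := by
    rw [key, ftc_part hp hpq hp73, zero_add, intervalIntegral.integral_const_mul,
      psi_integral hp hpq hp73]
  rw [show (∫ s in (0:ℝ)..1,
        (-(5 - p) * (1 - s ^ ((p - 1)/2)) + (5 - q) * (1 - s ^ ((q - 1)/2)))
          / (s ^ ((p - 1)/2) - s ^ ((q - 1)/2)) ^ ((3:ℝ)/2))
      = ∫ s in (0:ℝ)..1, phiF p q s from rfl, this, hc]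
  ring
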